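/- In the ring R₁ := 𝒪[[x,y,z]]/((1+y)² − 1), the uniformizer ϖ is a non-zero-divisor (so R₁ is 𝒪-torsion-free), and R₁ has exactly two minimal prime ideals, namely the ideals generated by the images of y and of y + 2. -/

import Mathlib

set_option linter.unusedSectionVars false


set_option synthInstance.maxHeartbeats 1000000
set_option maxHeartbeats 4000000

noncomputable section

open MvPowerSeries

variable (L : Type) [Field L] [Algebra ℚ_[2] L] [FiniteDimensional ℚ_[2] L]
  [Algebra ℤ_[2] L] [IsScalarTower ℤ_[2] ℚ_[2] L]

/-- The ring of integers `𝒪` of `L`: the integral closure of `ℤ₂` in `L`. -/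
abbrev RInt := integralClosure ℤ_[2] L

/-- The power series ring `𝒪[[x,y,z]]`, with `x = X 0`, `y = X 1`, `z = X 2`. -/
abbrev PS3 := MvPowerSeries (Fin 3) (RInt L)

/-- The ideal `((1+y)² − 1)` of `𝒪[[x,y,z]]`. -/
def r1Ideal : Ideal (PS3 L) :=
  Ideal.span {((1 : PS3 L) + X 1) ^ 2 - 1}

/-- The ring `R₁ = 𝒪[[x,y,z]]/((1+y)² − 1)`. -/
abbrev R1 := PS3 L ⧸ r1Ideal L

/-- The quotient map `𝒪[[x,y,z]] → R₁`. -/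
def mkR1 : PS3 L →+* R1 L := Ideal.Quotient.mk (r1Ideal L)

attribute [irreducible] r1Ideal mkR1


lemma algMapInj : Function.Injective (algebraMap ℤ_[2] (RInt L)) := by
  have h : Function.Injective (algebraMap ℤ_[2] L) := by
    rw [IsScalarTower.algebraMap_eq ℤ_[2] ℚ_[2] L]
    exact (algebraMap ℚ_[2] L).injective.comp (IsFractionRing.injective ℤ_[2] ℚ_[2])
  intro a b hab
  apply h
  rw [IsScalarTower.algebraMap_apply ℤ_[2] (RInt L) L, hab,
    ← IsScalarTower.algebraMap_apply ℤ_[2] (RInt L) L]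

instance : NoZeroSMulDivisors ℤ_[2] (RInt L) :=
  ⟨fun {c x} h => by
    rw [Algebra.smul_def, mul_eq_zero] at h
    exact h.imp_left (fun h' => (algMapInj L) (by rw [h', map_zero]))⟩

instance : Module.Finite ℤ_[2] (RInt L) :=
  haveI := IsIntegralClosure.isNoetherian ℤ_[2] ℚ_[2] L (RInt L)
  Module.Finite.of_restrictScalars_finite ℤ_[2] ℤ_[2] (RInt L)

instance : Module.Free ℤ_[2] (RInt L) := Module.free_of_finite_type_torsion_free'

abbrev bIdx := Module.Free.ChooseBasisIndex ℤ_[2] (RInt L)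

def eA : RInt L ≃ₗ[ℤ_[2]] (bIdx L → ℤ_[2]) :=
  (Module.Free.chooseBasis ℤ_[2] (RInt L)).equivFun

lemma norm_two' : ‖(2 : ℤ_[2])‖ = 1/2 := by
  have := @PadicInt.norm_p 2 _
  norm_num at this ⊢
  simpa using this

lemma summable_aux (c : ℕ → ℤ_[2]) : Summable (fun k : ℕ => (-2 : ℤ_[2])^k * c k) := by
  apply Summable.of_norm_bounded (g := fun k => (1/2 : ℝ)^k)
  · exact summable_geometric_of_lt_one (by norm_num) (by norm_num)
  · intro k
    calc ‖(-2 : ℤ_[2])^k * c k‖ ≤ ‖(-2 : ℤ_[2])^k‖ * ‖c k‖ := norm_mul_le _ _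
    _ ≤ ‖(-2 : ℤ_[2])‖^k * 1 := by
        refine mul_le_mul (le_of_eq (norm_pow _ k)) (PadicInt.norm_le_one _)
          (norm_nonneg _) ?_
        positivity
    _ ≤ (1/2)^k := by rw [mul_one, norm_neg, norm_two']

/-- `∑ₖ (-2)^k v k` computed coordinatewise in a `ℤ₂`-basis of `𝒪`. -/
def evalSum (v : ℕ → RInt L) : RInt L :=
  (eA L).symm (fun i => ∑' k : ℕ, (-2 : ℤ_[2])^k * (eA L (v k) i))

lemma summable_eval (v : ℕ → RInt L) (i : bIdx L) :
    Summable (fun k : ℕ => (-2 : ℤ_[2])^k * (eA L (v k) i)) := summable_aux _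

lemma eA_evalSum (v : ℕ → RInt L) (i : bIdx L) :
    eA L (evalSum L v) i = ∑' k : ℕ, (-2 : ℤ_[2])^k * (eA L (v k) i) := by
  rw [evalSum, LinearEquiv.apply_symm_apply]

lemma evalSum_add (v w : ℕ → RInt L) :
    evalSum L (fun k => v k + w k) = evalSum L v + evalSum L w := by
  apply (eA L).injective
  rw [map_add]
  funext i
  rw [Pi.add_apply, eA_evalSum, eA_evalSum, eA_evalSum,
    ← Summable.tsum_add (summable_eval L v i) (summable_eval L w i)]
  congr 1; funext k
  rw [map_add, Pi.add_apply]; ring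

lemma evalSum_single (v : ℕ → RInt L) (hv : ∀ k, k ≠ 0 → v k = 0) :
    evalSum L v = v 0 := by
  apply (eA L).injective
  funext i
  rw [eA_evalSum, tsum_eq_single 0]
  · simp
  · intro k hk; rw [hv k hk]; simp

lemma evalSum_zero : evalSum L (fun _ => 0) = 0 := by
  rw [evalSum_single L _ (fun _ _ => rfl)]

lemma evalSum_shift (v : ℕ → RInt L) :
    evalSum L v = v 0 + (-2 : RInt L) * evalSum L (fun k => v (k+1)) := by
  have hneg2 : (-2 : RInt L) = algebraMap ℤ_[2] (RInt L) (-2) := by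
    rw [map_neg, map_ofNat]
  apply (eA L).injective
  funext i
  have hsm : ∀ (x : RInt L), eA L ((-2 : RInt L) * x) i = (-2 : ℤ_[2]) * eA L x i := by
    intro x
    rw [hneg2, ← Algebra.smul_def, map_smul, Pi.smul_apply, smul_eq_mul]
  rw [eA_evalSum, map_add, Pi.add_apply, hsm, eA_evalSum,
    Summable.tsum_eq_zero_add (summable_eval L v i)]
  congr 1
  · simp
  · rw [← (summable_eval L (fun k => v (k+1)) i).tsum_mul_left]
    congr 1; funext k; ring

lemma evalSum_smul (a : RInt L) (v : ℕ → RInt L) :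
    evalSum L (fun k => a * v k) = a * evalSum L v := by
  classical
  set e := eA L with he
  set g : (bIdx L → ℤ_[2]) →ₗ[ℤ_[2]] (bIdx L → ℤ_[2]) :=
    (e.toLinearMap ∘ₗ LinearMap.mulLeft ℤ_[2] a) ∘ₗ e.symm.toLinearMap with hg
  have hga : ∀ x : RInt L, e (a * x) = g (e x) := by
    intro x
    simp [hg, LinearMap.mulLeft_apply]
  have hgmat : ∀ (w : bIdx L → ℤ_[2]) i,
      g w i = ∑ j, w j * g (fun l => if j = l then 1 else 0) i := by
    intro w i
    conv_lhs => rw [pi_eq_sum_univ w, map_sum]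
    rw [Finset.sum_apply]
    congr 1; funext j
    rw [map_smul, Pi.smul_apply, smul_eq_mul]
  apply e.injective
  funext i
  rw [eA_evalSum]
  have hR : e (a * evalSum L v) i
      = ∑ j, (∑' k : ℕ, (-2 : ℤ_[2])^k * e (v k) j) * g (fun l => if j = l then 1 else 0) i := by
    rw [hga, hgmat]
    congr 1; funext j
    congr 1
    exact eA_evalSum L v j
  rw [hR]
  calc ∑' k : ℕ, (-2 : ℤ_[2])^k * e (a * v k) i
      = ∑' k : ℕ, ∑ j, ((-2 : ℤ_[2])^k * e (v k) j) * g (fun l => if j = l then 1 else 0) i := by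
        congr 1; funext k
        rw [hga, hgmat, Finset.mul_sum]
        congr 1; funext j; ring
    _ = ∑ j, ∑' k : ℕ, ((-2 : ℤ_[2])^k * e (v k) j) * g (fun l => if j = l then 1 else 0) i :=
        Summable.tsum_finsetSum (fun j _ => (summable_eval L v j).mul_right _)
    _ = ∑ j, (∑' k : ℕ, (-2 : ℤ_[2])^k * e (v k) j) * g (fun l => if j = l then 1 else 0) i := by
        congr 1; funext j
        exact (summable_eval L v j).tsum_mul_right _

lemma evalSum_finsetSum {M : Type*} (s : Finset M) (w : M → ℕ → RInt L) :
    evalSum L (fun k => ∑ p ∈ s, w p k) = ∑ p ∈ s, evalSum L (w p) := by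
  classical
  induction s using Finset.induction_on with
  | empty => simpa using evalSum_zero L
  | insert _ _ hx ih =>
      rw [Finset.sum_insert hx, ← ih, ← evalSum_add]
      congr 1; funext k; rw [Finset.sum_insert hx]

lemma eq_zero_of_forall_two_pow_dvd (a : RInt L) (h : ∀ n : ℕ, (2 : RInt L)^n ∣ a) :
    a = 0 := by
  have key : ∀ (n : ℕ) (i : bIdx L), ‖eA L a i‖ ≤ (1/2 : ℝ)^n := by
    intro n i
    obtain ⟨b, hb⟩ := h n
    have h2n : a = ((2 : ℤ_[2])^n) • b := by
      rw [hb, Algebra.smul_def, map_pow, map_ofNat]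
    rw [h2n, map_smul, Pi.smul_apply, smul_eq_mul]
    calc ‖(2 : ℤ_[2])^n * eA L b i‖ ≤ ‖(2 : ℤ_[2])^n‖ * ‖eA L b i‖ := norm_mul_le _ _
    _ ≤ (1/2)^n * 1 := by
        refine mul_le_mul (le_of_eq ?_) (PadicInt.norm_le_one _) (norm_nonneg _) (by positivity)
        rw [norm_pow, norm_two']
    _ = (1/2)^n := mul_one _
  have hz : ∀ i, eA L a i = 0 := by
    intro i
    rw [← norm_le_zero_iff]
    exact ge_of_tendsto' (tendsto_pow_atTop_nhds_zero_of_lt_one (by norm_num) (by norm_num))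
      (fun n => key n i)
  have : eA L a = 0 := funext hz
  simpa using (map_eq_zero_iff (eA L) (eA L).injective).mp this

namespace Stmt18

/-- build a power series from its coefficient function -/
def mkPS (f : (Fin 3 →₀ ℕ) → RInt L) : PS3 L := f

lemma coeff_mkPS (f : (Fin 3 →₀ ℕ) → RInt L) (d : Fin 3 →₀ ℕ) :
    coeff (R := RInt L) d (mkPS L f) = f d := rfl

/-- kill all coefficients involving `y` -/
def Y0 (f : PS3 L) : PS3 L :=
  mkPS L (fun d => if d 1 = 0 then coeff (R := RInt L) d f else 0)

/-- divide `f` by `y`, discarding the `y`-free part -/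
def shiftY (f : PS3 L) : PS3 L :=
  mkPS L (fun d => coeff (R := RInt L) (d + Finsupp.single 1 1) f)

/-- evaluation of `f` at `y = -2` -/
def EV (f : PS3 L) : PS3 L :=
  mkPS L (fun d => if d 1 = 0 then
    evalSum L (fun k => coeff (R := RInt L) (d + Finsupp.single 1 k) f) else 0)

lemma coeff_Y0 (f : PS3 L) (d : Fin 3 →₀ ℕ) :
    coeff (R := RInt L) d (Y0 L f) = if d 1 = 0 then coeff (R := RInt L) d f else 0 := rfl

lemma coeff_EV (f : PS3 L) (d : Fin 3 →₀ ℕ) :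
    coeff (R := RInt L) d (EV L f) = if d 1 = 0 then
      evalSum L (fun k => coeff (R := RInt L) (d + Finsupp.single 1 k) f) else 0 := rfl

-- Finsupp helpers
lemma fs_apply1 (d : Fin 3 →₀ ℕ) (k : ℕ) :
    (d + Finsupp.single (1 : Fin 3) k) 1 = d 1 + k := by
  simp

lemma fs_sub_add (d : Fin 3 →₀ ℕ) (k : ℕ) :
    d + Finsupp.single (1 : Fin 3) (k+1) - Finsupp.single 1 1 = d + Finsupp.single 1 k := by
  ext j
  simp only [Finsupp.tsub_apply, Finsupp.add_apply, Finsupp.single_apply]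
  split_ifs <;> omega

lemma fs_sub_add' (d : Fin 3 →₀ ℕ) (hd : d 1 ≠ 0) (k : ℕ) :
    d - Finsupp.single (1 : Fin 3) 1 + Finsupp.single 1 (k+1) = d + Finsupp.single 1 k := by
  ext j
  simp only [Finsupp.tsub_apply, Finsupp.add_apply, Finsupp.single_apply]
  split_ifs with hj
  · subst hj; omega
  · omega

lemma fs_sub_add'' (d : Fin 3 →₀ ℕ) (hd : d 1 ≠ 0) :
    d - Finsupp.single (1 : Fin 3) 1 + Finsupp.single 1 1 = d := by
  ext j
  simp only [Finsupp.tsub_apply, Finsupp.add_apply, Finsupp.single_apply]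
  split_ifs with hj
  · subst hj; omega
  · omega

lemma coeff_X1_mul (q : PS3 L) (d : Fin 3 →₀ ℕ) :
    coeff (R := RInt L) d (X 1 * q) =
      if d 1 = 0 then 0 else coeff (R := RInt L) (d - Finsupp.single 1 1) q := by
  rw [X_def, coeff_monomial_mul]
  by_cases h : d 1 = 0
  · rw [if_neg, if_pos h]
    rw [Finsupp.single_le_iff]
    omega
  · rw [if_pos, if_neg h, one_mul]
    rw [Finsupp.single_le_iff]
    omega

lemma decompY (f : PS3 L) : f = Y0 L f + X 1 * shiftY L f := by
  apply MvPowerSeries.ext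
  intro d
  rw [map_add, coeff_Y0, coeff_X1_mul]
  by_cases h : d 1 = 0
  · rw [if_pos h, if_pos h, add_zero]
  · rw [if_neg h, if_neg h, zero_add, shiftY, coeff_mkPS, fs_sub_add'' d h]

lemma EV_add (f g : PS3 L) : EV L (f + g) = EV L f + EV L g := by
  apply MvPowerSeries.ext
  intro d
  rw [map_add, coeff_EV, coeff_EV, coeff_EV]
  by_cases h : d 1 = 0
  · simp only [if_pos h]
    rw [← evalSum_add]
    congr 1
  · simp only [if_neg h, add_zero]

lemma Y0_idem (f : PS3 L) : Y0 L (Y0 L f) = Y0 L f := by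
  apply MvPowerSeries.ext
  intro d
  by_cases h : d 1 = 0 <;> simp [coeff_Y0, h]

/-- EV is the identity on `y`-free series -/
lemma EV_yfree (u : PS3 L) (hu : Y0 L u = u) : EV L u = u := by
  have hu0 : ∀ e : Fin 3 →₀ ℕ, e 1 ≠ 0 → coeff (R := RInt L) e u = 0 := by
    intro e he
    rw [← hu, coeff_Y0, if_neg he]
  apply MvPowerSeries.ext
  intro d
  rw [coeff_EV]
  by_cases h : d 1 = 0
  · rw [if_pos h]
    rw [evalSum_single L _ ?_]
    · rw [Finsupp.single_zero, add_zero]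
    · intro k hk
      apply hu0
      rw [fs_apply1]
      omega
  · rw [if_neg h, hu0 d h]

/-- key multiplicative identity: for `u` y-free, `EV (u*g) = u * EV g` -/
lemma EV_yfree_mul (u : PS3 L) (hu : Y0 L u = u) (g : PS3 L) :
    EV L (u * g) = u * EV L g := by
  classical
  have hu0 : ∀ e : Fin 3 →₀ ℕ, e 1 ≠ 0 → coeff (R := RInt L) e u = 0 := by
    intro e he
    rw [← hu, coeff_Y0, if_neg he]
  apply MvPowerSeries.ext
  intro d
  rw [coeff_EV, coeff_mul]
  by_cases h : d 1 = 0
  · rw [if_pos h]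
    have inner : ∀ k : ℕ, coeff (R := RInt L) (d + Finsupp.single 1 k) (u * g)
        = ∑ p ∈ Finset.HasAntidiagonal.antidiagonal d,
            coeff (R := RInt L) p.1 u * coeff (R := RInt L) (p.2 + Finsupp.single 1 k) g := by
      intro k
      rw [coeff_mul]
      rw [← Finset.sum_filter_of_ne (p := fun p => p.1 1 = 0)
        (fun p _ hne => by by_contra hc; exact hne (by rw [hu0 p.1 hc, zero_mul]))]
      refine Finset.sum_nbij' (i := fun p => (p.1, p.2 - Finsupp.single 1 k))
        (j := fun p => (p.1, p.2 + Finsupp.single 1 k)) ?_ ?_ ?_ ?_ ?_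
      · rintro ⟨p1, p2⟩ hp
        simp only [Finset.mem_filter, Finset.HasAntidiagonal.mem_antidiagonal] at hp
        obtain ⟨hps, hp1⟩ := hp
        have hpt := DFunLike.congr_fun hps
        rw [Finset.HasAntidiagonal.mem_antidiagonal]
        ext j
        have h1 := hpt j
        have h2 := hpt 1
        rcases eq_or_ne (1 : Fin 3) j with hj | hj
        · subst hj
          simp only [Finsupp.add_apply, Finsupp.single_eq_same, Finsupp.tsub_apply] at h1 h2 ⊢
          omega
        · simp only [Finsupp.add_apply, Finsupp.single_eq_of_ne hj.symm, Finsupp.tsub_apply] at h1 ⊢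
          omega
      · rintro ⟨p1, p2⟩ hp
        rw [Finset.HasAntidiagonal.mem_antidiagonal] at hp
        have hpt := DFunLike.congr_fun hp
        simp only [Finset.mem_filter, Finset.HasAntidiagonal.mem_antidiagonal]
        constructor
        · show p1 + (p2 + Finsupp.single 1 k) = d + Finsupp.single 1 k
          rw [← add_assoc, hp]
        · show p1 1 = 0
          have h2 := hpt 1
          simp only [Finsupp.add_apply] at h2
          omega
      · rintro ⟨p1, p2⟩ hp
        simp only [Finset.mem_filter, Finset.HasAntidiagonal.mem_antidiagonal] at hp
        obtain ⟨hps, hp1⟩ := hp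
        have hpt := DFunLike.congr_fun hps
        have hk2 : p2 1 = k := by
          have h2 := hpt 1
          simp only [Finsupp.add_apply, Finsupp.single_eq_same] at h2
          omega
        show (p1, p2 - Finsupp.single 1 k + Finsupp.single 1 k) = (p1, p2)
        simp only [Prod.mk.injEq, true_and]
        ext j
        rcases eq_or_ne (1 : Fin 3) j with hj | hj
        · subst hj
          simp only [Finsupp.tsub_apply, Finsupp.add_apply, Finsupp.single_eq_same]
          omega
        · simp only [Finsupp.tsub_apply, Finsupp.add_apply, Finsupp.single_eq_of_ne hj.symm]
          omega
      · rintro ⟨p1, p2⟩ hp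
        show (p1, p2 + Finsupp.single 1 k - Finsupp.single 1 k) = (p1, p2)
        simp only [Prod.mk.injEq, true_and]
        ext j
        rcases eq_or_ne (1 : Fin 3) j with hj | hj
        · subst hj
          simp only [Finsupp.tsub_apply, Finsupp.add_apply, Finsupp.single_eq_same]
          omega
        · simp only [Finsupp.tsub_apply, Finsupp.add_apply, Finsupp.single_eq_of_ne hj]
          omega
      · rintro ⟨p1, p2⟩ hp
        simp only [Finset.mem_filter, Finset.HasAntidiagonal.mem_antidiagonal] at hp
        obtain ⟨hps, hp1⟩ := hp
        have hpt := DFunLike.congr_fun hps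
        have hk2 : p2 1 = k := by
          have h2 := hpt 1
          simp only [Finsupp.add_apply, Finsupp.single_eq_same] at h2
          omega
        have hsub : p2 - Finsupp.single (1 : Fin 3) k + Finsupp.single 1 k = p2 := by
          ext j
          rcases eq_or_ne (1 : Fin 3) j with hj | hj
          · subst hj
            simp only [Finsupp.tsub_apply, Finsupp.add_apply, Finsupp.single_eq_same]
            omega
          · simp only [Finsupp.tsub_apply, Finsupp.add_apply, Finsupp.single_eq_of_ne hj.symm]
            omega
        show coeff (R := RInt L) p1 u * coeff (R := RInt L) p2 g
          = coeff (R := RInt L) p1 u * coeff (R := RInt L) (p2 - Finsupp.single 1 k + Finsupp.single 1 k) g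
        rw [hsub]
    calc evalSum L (fun k => coeff (R := RInt L) (d + Finsupp.single 1 k) (u * g))
        = evalSum L (fun k => ∑ p ∈ Finset.HasAntidiagonal.antidiagonal d,
            coeff (R := RInt L) p.1 u * coeff (R := RInt L) (p.2 + Finsupp.single 1 k) g) := by
          congr 1; funext k; exact inner k
      _ = ∑ p ∈ Finset.HasAntidiagonal.antidiagonal d,
            evalSum L (fun k => coeff (R := RInt L) p.1 u * coeff (R := RInt L) (p.2 + Finsupp.single 1 k) g) :=
          evalSum_finsetSum L _ _
      _ = ∑ p ∈ Finset.HasAntidiagonal.antidiagonal d,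
            coeff (R := RInt L) p.1 u * coeff (R := RInt L) p.2 (EV L g) := by
          apply Finset.sum_congr rfl
          intro p hp
          rw [Finset.HasAntidiagonal.mem_antidiagonal] at hp
          have hp2 : p.2 1 = 0 := by
            have := DFunLike.congr_fun hp 1
            simp only [Finsupp.add_apply] at this
            omega
          rw [evalSum_smul, coeff_EV, if_pos hp2]
  · rw [if_neg h]
    symm
    apply Finset.sum_eq_zero
    intro p hp
    rw [Finset.HasAntidiagonal.mem_antidiagonal] at hp
    have := DFunLike.congr_fun hp 1
    simp only [Finsupp.add_apply] at this
    by_cases h1 : p.1 1 = 0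
    · have h2 : p.2 1 ≠ 0 := by omega
      rw [coeff_EV, if_neg h2, mul_zero]
    · rw [hu0 p.1 h1, zero_mul]

lemma EV_X1_mul (q : PS3 L) :
    EV L (X 1 * q) = C (σ := Fin 3) (R := RInt L) (-2) * EV L q := by
  apply MvPowerSeries.ext
  intro d
  rw [coeff_EV, coeff_C_mul, coeff_EV]
  by_cases h : d 1 = 0
  · rw [if_pos h, if_pos h,
      evalSum_shift L (fun k => coeff (R := RInt L) (d + Finsupp.single 1 k) (X 1 * q))]
    have h0 : coeff (R := RInt L) (d + Finsupp.single (1 : Fin 3) (0:ℕ)) (X 1 * q) = 0 := by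
      rw [coeff_X1_mul, if_pos]
      rw [fs_apply1]
      omega
    have hsucc : (fun k => coeff (R := RInt L) (d + Finsupp.single (1 : Fin 3) (k+1)) (X 1 * q))
        = fun k => coeff (R := RInt L) (d + Finsupp.single 1 k) q := by
      funext k
      rw [coeff_X1_mul, if_neg (by rw [fs_apply1]; omega), fs_sub_add]
    show coeff (R := RInt L) (d + Finsupp.single (1 : Fin 3) (0:ℕ)) (X 1 * q)
        + (-2 : RInt L) * evalSum L
            (fun k => coeff (R := RInt L) (d + Finsupp.single (1 : Fin 3) (k+1)) (X 1 * q))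
      = -2 * evalSum L (fun k => coeff (R := RInt L) (d + Finsupp.single 1 k) q)
    rw [h0, hsucc, zero_add]
  · rw [if_neg h, if_neg h, mul_zero]

lemma Y0_one : Y0 L 1 = 1 := by
  classical
  apply MvPowerSeries.ext
  intro d
  rw [coeff_Y0]
  by_cases h : d 1 = 0
  · rw [if_pos h]
  · rw [if_neg h, coeff_one, if_neg (by rintro rfl; simp at h)]

lemma EV_one : EV L 1 = 1 := EV_yfree L 1 (Y0_one L)

lemma two_eq_C : (2 : PS3 L) = C (σ := Fin 3) (R := RInt L) 2 := (map_ofNat (C (σ := Fin 3) (R := RInt L)) 2).symm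

lemma Y0_C (a : RInt L) : Y0 L (C (σ := Fin 3) (R := RInt L) a) = C (σ := Fin 3) (R := RInt L) a := by
  classical
  apply MvPowerSeries.ext
  intro d
  rw [coeff_Y0]
  by_cases h : d 1 = 0
  · rw [if_pos h]
  · rw [if_neg h, coeff_C, if_neg (by rintro rfl; simp at h)]

instance : Nontrivial (PS3 L) :=
  ⟨0, 1, fun h => by
    have := congrArg (constantCoeff (σ := Fin 3) (R := RInt L)) h
    rw [map_zero, map_one] at this
    exact zero_ne_one this⟩

instance : IsDomain (PS3 L) := NoZeroDivisors.to_isDomain _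

lemma EV_mul (f g : PS3 L) : EV L (f * g) = EV L f * EV L g := by
  have key : ∀ (n : ℕ) (f g : PS3 L) (d : Fin 3 →₀ ℕ),
      (2 : RInt L)^n ∣ coeff (R := RInt L) d (EV L (f * g) - EV L f * EV L g) := by
    intro n
    induction n with
    | zero => intro f g d; simpa using one_dvd _
    | succ n ih =>
      intro f g d
      have e2 : EV L f = Y0 L f + C (σ := Fin 3) (R := RInt L) (-2) * EV L (shiftY L f) := by
        conv_lhs => rw [decompY L f]
        rw [EV_add, EV_yfree L _ (Y0_idem L f), EV_X1_mul]
      have e3 : EV L g = Y0 L g + C (σ := Fin 3) (R := RInt L) (-2) * EV L (shiftY L g) := by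
        conv_lhs => rw [decompY L g]
        rw [EV_add, EV_yfree L _ (Y0_idem L g), EV_X1_mul]
      have hfg : f * g = Y0 L f * Y0 L g
          + X 1 * (Y0 L f * shiftY L g + Y0 L g * shiftY L f
              + X 1 * (shiftY L f * shiftY L g)) := by
        conv_lhs => rw [decompY L f, decompY L g]
        ring
      have e1 : EV L (f * g) = Y0 L f * Y0 L g
          + C (σ := Fin 3) (R := RInt L) (-2) * (Y0 L f * EV L (shiftY L g) + Y0 L g * EV L (shiftY L f)
            + C (σ := Fin 3) (R := RInt L) (-2) * EV L (shiftY L f * shiftY L g)) := by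
        rw [hfg, EV_add, EV_X1_mul, EV_add, EV_add, EV_X1_mul,
          EV_yfree_mul L (Y0 L f) (Y0_idem L f) (Y0 L g),
          EV_yfree L (Y0 L g) (Y0_idem L g),
          EV_yfree_mul L (Y0 L f) (Y0_idem L f) (shiftY L g),
          EV_yfree_mul L (Y0 L g) (Y0_idem L g) (shiftY L f)]
      have hstep : EV L (f * g) - EV L f * EV L g
          = C (σ := Fin 3) (R := RInt L) (-2) * C (σ := Fin 3) (R := RInt L) (-2) *
            (EV L (shiftY L f * shiftY L g) - EV L (shiftY L f) * EV L (shiftY L g)) := by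
        rw [e1, e2, e3]
        ring
      rw [hstep, ← map_mul, coeff_C_mul]
      obtain ⟨b, hb⟩ := ih (shiftY L f) (shiftY L g) d
      rw [hb]
      refine ⟨(2 : RInt L) * b, ?_⟩
      have : (-2 : RInt L) * -2 = 2 * 2 := by ring
      rw [this, pow_succ]
      ring
  apply MvPowerSeries.ext
  intro d
  have hd := eq_zero_of_forall_two_pow_dvd L _ (fun n => key n f g d)
  rw [map_sub] at hd
  exact sub_eq_zero.mp hd

lemma EV_C (a : RInt L) : EV L (C (σ := Fin 3) (R := RInt L) a) = C (σ := Fin 3) (R := RInt L) a :=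
  EV_yfree L _ (Y0_C L a)

lemma EV_X1 : EV L (X 1) = C (σ := Fin 3) (R := RInt L) (-2) := by
  have := EV_X1_mul L 1
  rwa [mul_one, EV_one, mul_one] at this

lemma EV_X1_add_two : EV L (X 1 + 2) = 0 := by
  rw [EV_add, EV_X1, two_eq_C, EV_C, ← map_add]
  norm_num

lemma EV_zero : EV L 0 = 0 := by
  have := EV_yfree_mul L (C (σ := Fin 3) (R := RInt L) 0) (Y0_C L 0) 0
  rw [map_zero, zero_mul, zero_mul] at this
  exact this

lemma EV_eq_zero_of_dvd (f : PS3 L) (h : (X 1 + 2 : PS3 L) ∣ f) : EV L f = 0 := by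
  obtain ⟨q, rfl⟩ := h
  rw [EV_mul, EV_X1_add_two, zero_mul]

lemma dvd_of_EV_eq_zero (f : PS3 L) (h : EV L f = 0) : (X 1 + 2 : PS3 L) ∣ f := by
  classical
  refine ⟨mkPS L (fun d => evalSum L (fun k => coeff (R := RInt L) (d + Finsupp.single 1 (k+1)) f)), ?_⟩
  set q := mkPS L (fun d => evalSum L (fun k => coeff (R := RInt L) (d + Finsupp.single 1 (k+1)) f))
    with hq
  apply MvPowerSeries.ext
  intro d
  have hshift := evalSum_shift L (fun k => coeff (R := RInt L) (d + Finsupp.single 1 k) f)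
  have hv0 : coeff (R := RInt L) (d + Finsupp.single (1 : Fin 3) (0:ℕ)) f = coeff (R := RInt L) d f := by
    rw [Finsupp.single_zero, add_zero]
  rw [add_mul, map_add, coeff_X1_mul, two_eq_C, coeff_C_mul]
  have hqd : coeff (R := RInt L) d q
      = evalSum L (fun k => coeff (R := RInt L) (d + Finsupp.single 1 (k+1)) f) := rfl
  by_cases hd : d 1 = 0
  · rw [if_pos hd, zero_add, hqd]
    have hEV : evalSum L (fun k => coeff (R := RInt L) (d + Finsupp.single 1 k) f) = 0 := by
      have := congrArg (coeff (R := RInt L) d) h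
      rw [coeff_EV, if_pos hd, map_zero] at this
      exact this
    rw [hEV, hv0] at hshift
    -- hshift : 0 = coeff d f + (-2) * evalSum (succ)
    have : (2 : RInt L) * evalSum L (fun k => coeff (R := RInt L) (d + Finsupp.single 1 (k+1)) f)
        = coeff (R := RInt L) d f := by linear_combination hshift
    rw [← this]
  · rw [if_neg hd]
    have hqsub : coeff (R := RInt L) (d - Finsupp.single 1 1) q
        = evalSum L (fun k => coeff (R := RInt L) (d + Finsupp.single 1 k) f) := by
      have : (fun k => coeff (R := RInt L) (d - Finsupp.single 1 1 + Finsupp.single 1 (k+1)) f)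
          = fun k => coeff (R := RInt L) (d + Finsupp.single 1 k) f := by
        funext k
        rw [fs_sub_add' d hd k]
      show evalSum L (fun k => coeff (R := RInt L) (d - Finsupp.single 1 1 + Finsupp.single 1 (k+1)) f)
        = _
      rw [this]
    rw [hqsub, hqd]
    rw [hv0] at hshift
    rw [hshift]
    ring

lemma Y0_mul (f g : PS3 L) : Y0 L (f * g) = Y0 L f * Y0 L g := by
  classical
  apply MvPowerSeries.ext
  intro d
  rw [coeff_Y0, coeff_mul, coeff_mul]
  by_cases h : d 1 = 0
  · rw [if_pos h]
    apply Finset.sum_congr rfl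
    intro p hp
    rw [Finset.HasAntidiagonal.mem_antidiagonal] at hp
    have := DFunLike.congr_fun hp 1
    simp only [Finsupp.add_apply] at this
    rw [coeff_Y0, coeff_Y0, if_pos (by omega), if_pos (by omega)]
  · rw [if_neg h]
    symm
    apply Finset.sum_eq_zero
    intro p hp
    rw [Finset.HasAntidiagonal.mem_antidiagonal] at hp
    have := DFunLike.congr_fun hp 1
    simp only [Finsupp.add_apply] at this
    by_cases h1 : p.1 1 = 0
    · rw [coeff_Y0 L g, if_neg (by omega), mul_zero]
    · rw [coeff_Y0 L f, if_neg h1, zero_mul]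

lemma Y0_eq_zero_of_dvd (f : PS3 L) (h : (X 1 : PS3 L) ∣ f) : Y0 L f = 0 := by
  obtain ⟨q, rfl⟩ := h
  rw [Y0_mul]
  have hX : Y0 L (X 1) = 0 := by
    apply MvPowerSeries.ext
    intro d
    rw [coeff_Y0, map_zero]
    by_cases h : d 1 = 0
    · rw [if_pos h]
      classical
      rw [coeff_X, if_neg]
      intro hd
      rw [hd] at h
      simp at h
    · rw [if_neg h]
  rw [hX, zero_mul]

lemma dvd_of_Y0_eq_zero (f : PS3 L) (h : Y0 L f = 0) : (X 1 : PS3 L) ∣ f := by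
  refine ⟨mkPS L (fun d => coeff (R := RInt L) (d + Finsupp.single 1 1) f), ?_⟩
  apply MvPowerSeries.ext
  intro d
  rw [coeff_X1_mul]
  by_cases hd : d 1 = 0
  · rw [if_pos hd]
    have := congrArg (coeff (R := RInt L) d) h
    rw [coeff_Y0, if_pos hd, map_zero] at this
    exact this
  · rw [if_neg hd]
    show _ = coeff (R := RInt L) (d - Finsupp.single 1 1 + Finsupp.single 1 1) f
    rw [fs_sub_add'' d hd]

lemma two_ne_zeroA : (2 : RInt L) ≠ 0 := by
  haveI : CharZero L := charZero_of_injective_algebraMap (algebraMap ℚ_[2] L).injective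
  intro h
  have h2 : ((2 : RInt L) : L) = 0 := by rw [h]; rfl
  rw [show ((2 : RInt L) : L) = (2 : L) from rfl] at h2
  exact two_ne_zero h2

lemma not_unit_two : ¬ IsUnit (2 : RInt L) := by
  intro h
  obtain ⟨u, hu⟩ := h
  have hinv : (2 : RInt L) * ↑u⁻¹ = 1 := by rw [← hu, Units.mul_inv]
  set t : RInt L := ↑u⁻¹ with ht
  have h2L : (2 : L) * (t : L) = 1 := by
    have := congrArg (Subalgebra.val (integralClosure ℤ_[2] L)) hinv
    rw [map_mul, map_one] at this
    exact this
  have htL : (t : L) = algebraMap ℚ_[2] L (2⁻¹ : ℚ_[2]) := by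
    rw [map_inv₀, map_ofNat]
    exact eq_inv_of_mul_eq_one_right h2L
  have hint : IsIntegral ℤ_[2] ((algebraMap ℚ_[2] L) (2⁻¹ : ℚ_[2])) := by
    rw [← htL]
    exact t.2
  rw [isIntegral_algebraMap_iff (algebraMap ℚ_[2] L).injective] at hint
  obtain ⟨y, hy⟩ := IsIntegrallyClosed.isIntegral_iff.mp hint
  have h2y : (2 : ℤ_[2]) * y = 1 := by
    apply IsFractionRing.injective ℤ_[2] ℚ_[2]
    rw [map_mul, hy, map_one, map_ofNat]
    norm_num
  have hu2 : IsUnit (2 : ℤ_[2]) := IsUnit.of_mul_eq_one _ h2y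
  rw [PadicInt.isUnit_iff, norm_two'] at hu2
  norm_num at hu2

lemma C_inj (a : RInt L) (h : C (σ := Fin 3) (R := RInt L) a = 0) : a = 0 := by
  have := congrArg (constantCoeff (σ := Fin 3) (R := RInt L)) h
  rwa [constantCoeff_C, map_zero] at this

lemma X1_ne_zero : (X 1 : PS3 L) ≠ 0 := by
  classical
  intro h
  have := congrArg (coeff (R := RInt L) (Finsupp.single 1 1)) h
  rw [coeff_X, if_pos rfl, map_zero] at this
  exact one_ne_zero this

lemma X1_add_two_ne_zero : (X 1 + 2 : PS3 L) ≠ 0 := by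
  intro h
  have := congrArg (constantCoeff (σ := Fin 3) (R := RInt L)) h
  rw [map_add, constantCoeff_X, map_ofNat, map_zero, zero_add] at this
  exact two_ne_zeroA L this

lemma not_unit_X1 : ¬ IsUnit (X 1 : PS3 L) := by
  intro h
  have := h.map (constantCoeff (σ := Fin 3) (R := RInt L))
  rw [constantCoeff_X] at this
  rw [isUnit_zero_iff] at this
  exact zero_ne_one (α := RInt L) this

lemma not_unit_X1_add_two : ¬ IsUnit (X 1 + 2 : PS3 L) := by
  intro h
  have := h.map (constantCoeff (σ := Fin 3) (R := RInt L))
  rw [map_add, constantCoeff_X, map_ofNat, zero_add] at this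
  exact not_unit_two L this

lemma prime_X1 : Prime (X 1 : PS3 L) := by
  refine ⟨X1_ne_zero L, not_unit_X1 L, ?_⟩
  intro a b hab
  have h0 : Y0 L a * Y0 L b = 0 := by
    rw [← Y0_mul]
    exact Y0_eq_zero_of_dvd L _ hab
  rcases mul_eq_zero.mp h0 with h | h
  · exact Or.inl (dvd_of_Y0_eq_zero L a h)
  · exact Or.inr (dvd_of_Y0_eq_zero L b h)

lemma prime_X1_add_two : Prime (X 1 + 2 : PS3 L) := by
  refine ⟨X1_add_two_ne_zero L, not_unit_X1_add_two L, ?_⟩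
  intro a b hab
  have h0 : EV L a * EV L b = 0 := by
    rw [← EV_mul]
    exact EV_eq_zero_of_dvd L _ hab
  rcases mul_eq_zero.mp h0 with h | h
  · exact Or.inl (dvd_of_EV_eq_zero L a h)
  · exact Or.inr (dvd_of_EV_eq_zero L b h)

lemma Cpi_not_dvd_X1 (a : RInt L) (ha : a ≠ 0) : ¬ (X 1 : PS3 L) ∣ C (σ := Fin 3) (R := RInt L) a := by
  intro h
  have := Y0_eq_zero_of_dvd L _ h
  rw [Y0_C] at this
  exact ha (C_inj L a this)

lemma Cpi_not_dvd_X1_add_two (a : RInt L) (ha : a ≠ 0) :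
    ¬ (X 1 + 2 : PS3 L) ∣ C (σ := Fin 3) (R := RInt L) a := by
  intro h
  have := EV_eq_zero_of_dvd L _ h
  rw [EV_C] at this
  exact ha (C_inj L a this)

lemma X1_not_dvd_X1_add_two : ¬ (X 1 : PS3 L) ∣ (X 1 + 2 : PS3 L) := by
  intro h
  have h2 : (X 1 : PS3 L) ∣ (2 : PS3 L) := (dvd_add_right (dvd_refl _)).mp h
  have := Y0_eq_zero_of_dvd L _ h2
  rw [two_eq_C, Y0_C] at this
  exact two_ne_zeroA L (C_inj L _ this)

lemma X1_add_two_not_dvd_X1 : ¬ (X 1 + 2 : PS3 L) ∣ (X 1 : PS3 L) := by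
  intro h
  have := EV_eq_zero_of_dvd L _ h
  rw [EV_X1] at this
  have h2 := C_inj L _ this
  rw [neg_eq_zero] at h2
  exact two_ne_zeroA L h2

end Stmt18

open Stmt18

section Plumbing
variable (L : Type) [Field L] [Algebra ℚ_[2] L] [FiniteDimensional ℚ_[2] L]
  [Algebra ℤ_[2] L] [IsScalarTower ℤ_[2] ℚ_[2] L]

lemma hfac : ((1 : PS3 L) + X 1)^2 - 1 = X 1 * (X 1 + 2) := by ring

lemma r1_eq : r1Ideal L = Ideal.span {(X 1 : PS3 L) * (X 1 + 2)} := by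
  unfold r1Ideal
  rw [hfac]

lemma mk_surj : Function.Surjective (mkR1 L) := by
  unfold mkR1
  exact Ideal.Quotient.mk_surjective

lemma mk_ker : RingHom.ker (mkR1 L) = r1Ideal L := by
  unfold mkR1
  exact Ideal.mk_ker

lemma minPrimes_r1 : (r1Ideal L).minimalPrimes
    = {Ideal.span {(X 1 : PS3 L)}, Ideal.span {(X 1 + 2 : PS3 L)}} := by
  have hp1 : (Ideal.span {(X 1 : PS3 L)}).IsPrime :=
    (Ideal.span_singleton_prime (X1_ne_zero L)).mpr (prime_X1 L)
  have hp2 : (Ideal.span {(X 1 + 2 : PS3 L)}).IsPrime :=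
    (Ideal.span_singleton_prime (X1_add_two_ne_zero L)).mpr (prime_X1_add_two L)
  have hle1 : r1Ideal L ≤ Ideal.span {(X 1 : PS3 L)} := by
    rw [r1_eq, Ideal.span_singleton_le_iff_mem, Ideal.mem_span_singleton]
    exact dvd_mul_right _ _
  have hle2 : r1Ideal L ≤ Ideal.span {(X 1 + 2 : PS3 L)} := by
    rw [r1_eq, Ideal.span_singleton_le_iff_mem, Ideal.mem_span_singleton]
    exact dvd_mul_left _ _
  have hmem : ∀ q : Ideal (PS3 L), q.IsPrime → r1Ideal L ≤ q →
      Ideal.span {(X 1 : PS3 L)} ≤ q ∨ Ideal.span {(X 1 + 2 : PS3 L)} ≤ q := by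
    intro q hq hle
    have hin : (X 1 : PS3 L) * (X 1 + 2) ∈ q := by
      apply hle
      rw [r1_eq]
      exact Ideal.subset_span rfl
    rcases hq.mem_or_mem hin with h | h
    · left; rwa [Ideal.span_singleton_le_iff_mem]
    · right; rwa [Ideal.span_singleton_le_iff_mem]
  ext p
  simp only [Set.mem_insert_iff, Set.mem_singleton_iff]
  constructor
  · rintro ⟨⟨hp, hle⟩, hmin⟩
    rcases hmem p hp hle with h | h
    · left; exact le_antisymm (hmin ⟨hp1, hle1⟩ h) h
    · right; exact le_antisymm (hmin ⟨hp2, hle2⟩ h) h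
  · rintro (rfl | rfl)
    · refine ⟨⟨hp1, hle1⟩, ?_⟩
      intro q hq hle
      rcases hmem q hq.1 hq.2 with h | h
      · exact h
      · exact absurd (Ideal.mem_span_singleton.mp (hle (h (Ideal.subset_span rfl))))
          (X1_not_dvd_X1_add_two L)
    · refine ⟨⟨hp2, hle2⟩, ?_⟩
      intro q hq hle
      rcases hmem q hq.1 hq.2 with h | h
      · exact absurd (Ideal.mem_span_singleton.mp (hle (h (Ideal.subset_span rfl))))
          (X1_add_two_not_dvd_X1 L)
      · exact h

end Plumbing

/-- In `R₁ = 𝒪[[x,y,z]]/((1+y)² − 1)` the uniformizer `ϖ` is a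
non-zero-divisor (so `R₁` is `𝒪`-torsion-free), and `R₁` has exactly two
minimal primes, generated by the images of `y` and of `y + 2` respectively. -/
theorem stmt_18 (ϖ : RInt L) (hϖ : Irreducible ϖ) :
    (∀ s : R1 L, mkR1 L (C (σ := Fin 3) (R := RInt L) ϖ) * s = 0 → s = 0) ∧
    minimalPrimes (R1 L) =
      {Ideal.span {mkR1 L (X 1)}, Ideal.span {mkR1 L (X 1) + 2}} ∧
    Ideal.span {mkR1 L (X 1)} ≠ Ideal.span {mkR1 L (X 1) + 2} := by
  classical
  have hsurj := mk_surj L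
  have hker := mk_ker L
  refine ⟨?_, ?_, ?_⟩
  · -- ϖ is a non-zero-divisor
    intro s hs
    obtain ⟨f, rfl⟩ := hsurj s
    rw [← map_mul] at hs
    have hmem : C (σ := Fin 3) (R := RInt L) ϖ * f ∈ r1Ideal L := by
      rw [← hker]
      exact RingHom.mem_ker.mpr hs
    rw [r1_eq, Ideal.mem_span_singleton] at hmem
    have hpi : (ϖ : RInt L) ≠ 0 := hϖ.ne_zero
    rcases (prime_X1 L).2.2 _ _ (dvd_trans (dvd_mul_right _ _) hmem) with hc | hf1
    · exact absurd hc (Cpi_not_dvd_X1 L ϖ hpi)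
    · obtain ⟨f1, rfl⟩ := hf1
      obtain ⟨t, ht⟩ := hmem
      have hcan : C (σ := Fin 3) (R := RInt L) ϖ * f1 = (X 1 + 2) * t := by
        apply mul_left_cancel₀ (X1_ne_zero L)
        linear_combination ht
      rcases (prime_X1_add_two L).2.2 _ _ ⟨t, hcan⟩ with hc | hf2
      · exact absurd hc (Cpi_not_dvd_X1_add_two L ϖ hpi)
      · obtain ⟨f2, rfl⟩ := hf2
        have hk : X 1 * ((X 1 + 2) * f2) ∈ RingHom.ker (mkR1 L) := by
          rw [hker, r1_eq, Ideal.mem_span_singleton]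
          exact ⟨f2, by ring⟩
        exact RingHom.mem_ker.mp hk
  · -- the minimal primes
    have himg : Ideal.comap (mkR1 L) '' minimalPrimes (R1 L) = (r1Ideal L).minimalPrimes := by
      rw [minimalPrimes, ← Ideal.comap_minimalPrimes_eq_of_surjective hsurj ⊥]
      congr 1
    have hmc : ∀ J : Ideal (R1 L), Ideal.map (mkR1 L) (Ideal.comap (mkR1 L) J) = J :=
      fun J => Ideal.map_comap_of_surjective _ hsurj J
    have hT : minimalPrimes (R1 L)
        = Ideal.map (mkR1 L) '' ((r1Ideal L).minimalPrimes) := by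
      rw [← himg, Set.image_image]
      symm
      rw [Set.image_congr (g := id) (fun a _ => hmc a), Set.image_id]
    rw [hT, minPrimes_r1, Set.image_insert_eq, Set.image_singleton,
      Ideal.map_span, Ideal.map_span, Set.image_singleton, Set.image_singleton,
      show mkR1 L (X 1 + 2) = mkR1 L (X 1) + 2 by rw [map_add, map_ofNat]]
  · -- the two minimal primes are distinct
    intro heq
    have hx : mkR1 L (X 1) ∈ Ideal.span {mkR1 L (X 1) + 2} := by
      rw [← heq]; exact Ideal.subset_span rfl
    rw [show mkR1 L (X 1) + 2 = mkR1 L (X 1 + 2) by rw [map_add, map_ofNat]] at hx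
    rw [show Ideal.span {mkR1 L (X 1 + 2)}
        = Ideal.map (mkR1 L) (Ideal.span {(X 1 + 2 : PS3 L)}) by
      rw [Ideal.map_span, Set.image_singleton]] at hx
    rw [Ideal.mem_map_iff_of_surjective _ hsurj] at hx
    obtain ⟨x, hxmem, hxeq⟩ := hx
    have hdiff : X 1 - x ∈ Ideal.span {(X 1 + 2 : PS3 L)} := by
      have hd2 : X 1 - x ∈ r1Ideal L := by
        rw [← hker, RingHom.mem_ker, map_sub, hxeq, sub_self]
      rw [r1_eq, Ideal.mem_span_singleton] at hd2
      rw [Ideal.mem_span_singleton]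
      exact dvd_trans (dvd_mul_left _ _) hd2
    have hX1mem : (X 1 : PS3 L) ∈ Ideal.span {(X 1 + 2 : PS3 L)} := by
      have hsum := Ideal.add_mem _ hdiff hxmem
      simpa using hsum
    exact absurd (Ideal.mem_span_singleton.mp hX1mem) (X1_add_two_not_dvd_X1 L)
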